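/- (Zaslavsky) Let 𝒜 be a central hyperplane arrangement of rank r in ℝ^d. Then (−1)^r χ_𝒜(−1) = |ℛ(𝒜)|, the number of regions of 𝒜. -/

import Mathlib

/-!
Formalization of statements from "Projection Volumes of Hyperplane Arrangements"
by Klivans and Swartz.
-/

open scoped RealInnerProductSpace Pointwise
open MeasureTheory Metric Set

noncomputable section

attribute [local instance] Classical.decEq Classical.propDecidable

/-- Shorthand for the ambient Euclidean space `ℝ^d`. -/
abbrev Euc (d : ℕ) := EuclideanSpace ℝ (Fin d)

variable {E : Type*} [NormedAddCommGroup E] [InnerProductSpace ℝ E] [FiniteDimensional ℝ E]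
  [MeasurableSpace E] [BorelSpace E]

/-- A (linear) hyperplane: the orthogonal complement of a nonzero vector,
i.e. a codimension-one linear subspace. -/
def IsLinearHyperplane (H : Submodule ℝ E) : Prop :=
  ∃ η : E, η ≠ 0 ∧ H = (Submodule.span ℝ {η})ᗮ

/-- The intersection poset `L(𝒜)`: all intersections of subsets of `𝒜`
(the empty intersection being the whole space `⊤`), as a finset of subspaces.
It is ordered by *reverse* inclusion: `x ⊑ y` in `L(𝒜)` iff `y ≤ x` as submodules;
the minimal element `ℝ^d` is `⊤`. -/
def interPoset (A : Finset (Submodule ℝ E)) : Finset (Submodule ℝ E) :=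
  A.powerset.image fun S => S.inf id

/-- The complement of the union of the hyperplanes of `𝒜`. -/
def hypComplement (A : Finset (Submodule ℝ E)) : Set E :=
  {z | ∀ H ∈ A, z ∉ H}

/-- A region of `𝒜`: a connected component of the complement of the hyperplanes. -/
def IsRegion (A : Finset (Submodule ℝ E)) (C : Set E) : Prop :=
  ∃ z ∈ hypComplement A, C = connectedComponentIn (hypComplement A) z

/-- `p` is the nearest point of `C` to `z` (i.e. `p = π_C(z)`, the orthogonal
projection of `z` onto `C`; it is unique when `C` is nonempty, closed and convex). -/
def IsNearestPt (C : Set E) (z p : E) : Prop :=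
  p ∈ C ∧ ∀ q ∈ C, dist z p ≤ dist z q

/-- A face of a convex set `C`: a nonempty exposed face (`C` itself included). -/
def IsFaceOf (C F : Set E) : Prop :=
  F.Nonempty ∧ IsExposed ℝ C F

/-- The dimension of a set: the dimension of the direction space of its affine span. -/
def sdim (F : Set E) : ℕ := Module.finrank ℝ (vectorSpan ℝ F)

/-- `X_F`: the set of points `z` whose orthogonal projection onto `C` lies in the
relative interior (= intrinsic interior) of the face `F`. -/
def projRegion (C F : Set E) : Set E :=
  {z | ∃ p, IsNearestPt C z p ∧ p ∈ intrinsicInterior ℝ F}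

/-- `ν_C(F)`: the fraction of the volume of the unit ball occupied by `X_F`. -/
def nuF (C F : Set E) : ℝ :=
  (volume (projRegion C F ∩ closedBall (0 : E) 1)).toReal /
    (volume (closedBall (0 : E) 1)).toReal

/-- `ν_k(C)`: the sum of `ν_C(F)` over all `k`-dimensional faces `F` of `C`. -/
def nuK (C : Set E) (k : ℕ) : ℝ :=
  ∑ᶠ F ∈ {F | IsFaceOf C F ∧ sdim F = k}, nuF C F


set_option linter.unusedSectionVars false

/-- `z` realizes the sign vector `σ` w.r.t. the normals `η`. -/
def ZRealizes {n : ℕ} (η : Fin n → E) (z : E) (σ : Fin n → Bool) : Prop :=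
  ∀ i, if σ i then 0 < ⟪η i, z⟫ else ⟪η i, z⟫ < 0

def zCell {n : ℕ} (η : Fin n → E) (σ : Fin n → Bool) : Set E := {z | ZRealizes η z σ}

def zReal {n : ℕ} (η : Fin n → E) : Finset (Fin n → Bool) :=
  Finset.univ.filter fun σ => ∃ z, ZRealizes η z σ

def zOnes {n : ℕ} (σ : Fin n → Bool) : ℕ := ∑ i, if σ i then 1 else 0

def zRk {n : ℕ} (η : Fin n → E) (σ : Fin n → Bool) : ℕ :=
  Module.finrank ℝ (Submodule.span ℝ (η '' {i | σ i = true}))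

def zG {n : ℕ} (η : Fin n → E) : ℤ := ∑ σ : Fin n → Bool, (-1) ^ (zOnes σ + zRk η σ)

def zHalf (w : E) (b : Bool) : Set E := if b then {z | 0 < ⟪w, z⟫} else {z | ⟪w, z⟫ < 0}

lemma zCell_eq {n : ℕ} (η : Fin n → E) (σ : Fin n → Bool) :
    zCell η σ = ⋂ i, zHalf (η i) (σ i) := by
  ext z
  simp only [zCell, ZRealizes, Set.mem_setOf_eq, Set.mem_iInter, zHalf]
  refine forall_congr' fun i => ?_
  cases h : σ i <;> simp

lemma zHalf_isOpen (w : E) (b : Bool) : IsOpen (zHalf w b) := by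
  have hc : Continuous fun z : E => ⟪w, z⟫ := Continuous.inner continuous_const continuous_id
  cases b <;> simp only [zHalf, if_true, if_false]
  · exact isOpen_lt hc continuous_const
  · exact isOpen_lt continuous_const hc

lemma zHalf_convex (w : E) (b : Bool) : Convex ℝ (zHalf w b) := by
  have hl : IsLinearMap ℝ fun z : E => ⟪w, z⟫ :=
    ⟨fun x y => inner_add_right _ _ _, fun c x => real_inner_smul_right w x c⟩
  cases b <;> simp only [zHalf, if_true, if_false]
  · exact convex_halfSpace_lt hl 0
  · exact convex_halfSpace_gt hl 0

lemma zCell_isOpen {n : ℕ} (η : Fin n → E) (σ : Fin n → Bool) : IsOpen (zCell η σ) := by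
  rw [zCell_eq]; exact isOpen_iInter_of_finite fun i => zHalf_isOpen _ _

lemma zCell_convex {n : ℕ} (η : Fin n → E) (σ : Fin n → Bool) : Convex ℝ (zCell η σ) := by
  rw [zCell_eq]; exact convex_iInter fun i => zHalf_convex _ _

def zSgn {n : ℕ} (η : Fin n → E) (z : E) : Fin n → Bool := fun i => decide (0 < ⟪η i, z⟫)

lemma zRealizes_sgn {n : ℕ} {η : Fin n → E} {z : E} (hz : ∀ i, ⟪η i, z⟫ ≠ 0) :
    ZRealizes η z (zSgn η z) := by
  intro i
  by_cases h : 0 < ⟪η i, z⟫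
  · simp [zSgn, h]
  · have : ⟪η i, z⟫ < 0 := lt_of_le_of_ne (not_lt.mp h) (hz i)
    simp [zSgn, h, this]

lemma zRealizes_eq_sgn {n : ℕ} {η : Fin n → E} {z : E} {σ : Fin n → Bool}
    (h : ZRealizes η z σ) : σ = zSgn η z := by
  funext i
  have hi := h i
  cases hσ : σ i
  · rw [hσ] at hi; simp only [Bool.false_eq_true, if_false] at hi
    simp [zSgn, not_lt.mpr hi.le]
  · rw [hσ] at hi; simp only [if_true] at hi
    simp [zSgn, hi]

lemma zCell_component {n : ℕ} (η : Fin n → E) {z : E}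
    (hz : z ∈ {w : E | ∀ i, ⟪η i, w⟫ ≠ 0}) :
    connectedComponentIn {w : E | ∀ i, ⟪η i, w⟫ ≠ 0} z = zCell η (zSgn η z) := by
  set S : Set E := {w : E | ∀ i, ⟪η i, w⟫ ≠ 0} with hS
  apply Set.Subset.antisymm
  · intro y hy
    have hyS : y ∈ S := connectedComponentIn_subset S z hy
    have hK : IsPreconnected (connectedComponentIn S z) := isPreconnected_connectedComponentIn
    have hzK : z ∈ connectedComponentIn S z := mem_connectedComponentIn hz
    -- sign of each inner product is constant on the component
    have key : ∀ i, (0 < ⟪η i, z⟫ ↔ 0 < ⟪η i, y⟫) := by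
      intro i
      by_contra hcon
      have hc : Continuous fun w : E => ⟪η i, w⟫ :=
        Continuous.inner continuous_const continuous_id
      have himg : IsPreconnected ((fun w : E => ⟪η i, w⟫) '' connectedComponentIn S z) :=
        hK.image _ hc.continuousOn
      have hoc := himg.ordConnected
      have h0 : (0 : ℝ) ∈ (fun w : E => ⟪η i, w⟫) '' connectedComponentIn S z := by
        by_cases hza : 0 < ⟪η i, z⟫
        · have hyb : ¬ 0 < ⟪η i, y⟫ := fun h => hcon ⟨fun _ => h, fun _ => hza⟩
          have hyneg : ⟪η i, y⟫ < 0 := lt_of_le_of_ne (not_lt.mp hyb) (hyS i)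
          exact hoc.out ⟨y, hy, rfl⟩ ⟨z, hzK, rfl⟩ ⟨hyneg.le, hza.le⟩
        · have hyb : 0 < ⟪η i, y⟫ := by
            by_contra h; exact hcon ⟨fun hh => absurd hh hza, fun hh => absurd hh h⟩
          have hzneg : ⟪η i, z⟫ < 0 := lt_of_le_of_ne (not_lt.mp hza) (hz i)
          exact hoc.out ⟨z, hzK, rfl⟩ ⟨y, hy, rfl⟩ ⟨hzneg.le, hyb.le⟩
      obtain ⟨w, hwK, hw0⟩ := h0
      exact (connectedComponentIn_subset S z hwK) i hw0
    intro i
    by_cases h : 0 < ⟪η i, z⟫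
    · simp [zSgn, h, (key i).mp h]
    · have hyneg : ⟪η i, y⟫ < 0 :=
        lt_of_le_of_ne (not_lt.mp fun hh => h ((key i).mpr hh)) (hyS i)
      simp [zSgn, h, hyneg]
  · refine IsPreconnected.subset_connectedComponentIn ?_ ?_ ?_
    · exact (zCell_convex η (zSgn η z)).isPreconnected
    · exact zRealizes_sgn hz
    · intro y hy i
      have := hy i
      cases h : zSgn η z i
      · rw [h] at this; simp only [Bool.false_eq_true, if_false] at this; exact ne_of_lt this
      · rw [h] at this; simp only [if_true] at this; exact ne_of_gt this

lemma zRegion_count {n : ℕ} (η : Fin n → E) :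
    {C : Set E | ∃ z ∈ {w : E | ∀ i, ⟪η i, w⟫ ≠ 0},
        C = connectedComponentIn {w : E | ∀ i, ⟪η i, w⟫ ≠ 0} z}.ncard
      = (zReal η).card := by
  set S : Set E := {w : E | ∀ i, ⟪η i, w⟫ ≠ 0} with hS
  have himg : {C : Set E | ∃ z ∈ S, C = connectedComponentIn S z}
      = (fun σ => zCell η σ) '' ((zReal η : Finset (Fin n → Bool)) : Set (Fin n → Bool)) := by
    ext C
    constructor
    · rintro ⟨z, hzS, rfl⟩
      refine ⟨zSgn η z, ?_, (zCell_component η hzS).symm⟩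
      simp only [Finset.coe_filter, zReal, Finset.mem_univ, true_and, Set.mem_setOf_eq]
      exact ⟨z, zRealizes_sgn hzS⟩
    · rintro ⟨σ, hσ, rfl⟩
      simp only [Finset.coe_filter, zReal, Finset.mem_univ, true_and, Set.mem_setOf_eq] at hσ
      obtain ⟨z, hz⟩ := hσ
      have hzS : z ∈ S := by
        intro i
        have := hz i
        cases h : σ i
        · rw [h] at this; simp only [Bool.false_eq_true, if_false] at this; exact ne_of_lt this
        · rw [h] at this; simp only [if_true] at this; exact ne_of_gt this
      refine ⟨z, hzS, ?_⟩
      rw [zCell_component η hzS, ← zRealizes_eq_sgn hz]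
  rw [himg]
  rw [Set.ncard_image_of_injOn, Set.ncard_coe_finset]
  intro σ₁ h₁ σ₂ h₂ hcell
  simp only [Finset.coe_filter, zReal, Finset.mem_univ, true_and, Set.mem_setOf_eq] at h₁ h₂
  obtain ⟨z, hz⟩ := h₁
  have hz₂ : ZRealizes η z σ₂ := by
    have hc : zCell η σ₁ = zCell η σ₂ := hcell
    have : z ∈ zCell η σ₂ := by rw [← hc]; exact hz
    exact this
  rw [zRealizes_eq_sgn hz, zRealizes_eq_sgn hz₂]

lemma zRealizes_cons {n : ℕ} {η : Fin (n + 1) → E} {z : E} {b : Bool} {σ' : Fin n → Bool} :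
    ZRealizes η z (Fin.cons b σ') ↔
      (if b then 0 < ⟪η 0, z⟫ else ⟪η 0, z⟫ < 0) ∧ ZRealizes (η ∘ Fin.succ) z σ' := by
  constructor
  · intro h
    refine ⟨by simpa using h 0, fun i => by simpa using h i.succ⟩
  · rintro ⟨h0, hs⟩ i
    refine Fin.cases ?_ ?_ i
    · simpa using h0
    · intro j; simpa using hs j

/-- Perturbation: from a witness on the hyperplane `v^⊥`, get witnesses on both sides. -/
lemma zPerturb {n : ℕ} {η' : Fin n → E} {σ' : Fin n → Bool} {v z : E} (hv : v ≠ 0)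
    (hz : ZRealizes η' z σ') (hvz : ⟪v, z⟫ = 0) :
    ∃ zp zm, ZRealizes η' zp σ' ∧ ZRealizes η' zm σ' ∧ 0 < ⟪v, zp⟫ ∧ ⟪v, zm⟫ < 0 := by
  have hopen : IsOpen (zCell η' σ') := zCell_isOpen η' σ'
  obtain ⟨ε, hε, hball⟩ := Metric.isOpen_iff.mp hopen z hz
  have hnv : (0 : ℝ) < ‖v‖ := norm_pos_iff.mpr hv
  set t : ℝ := ε / (2 * ‖v‖) with ht
  have htpos : 0 < t := div_pos hε (by positivity)
  have hmem : ∀ s : ℝ, |s| = t → z + s • v ∈ zCell η' σ' := by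
    intro s hs
    apply hball
    rw [Metric.mem_ball, dist_eq_norm]
    have : z + s • v - z = s • v := by abel
    rw [this, norm_smul, Real.norm_eq_abs, hs, ht]
    rw [div_mul_eq_mul_div]
    rw [div_lt_iff₀ (by positivity)]
    nlinarith [hε, hnv]
  have hinner : ∀ s : ℝ, ⟪v, z + s • v⟫ = s * ‖v‖ ^ 2 := by
    intro s
    rw [inner_add_right, hvz, real_inner_smul_right, real_inner_self_eq_norm_sq]
    ring
  refine ⟨z + t • v, z + (-t) • v, hmem t (abs_of_pos htpos), hmem (-t) (by rw [abs_neg, abs_of_pos htpos]), ?_, ?_⟩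
  · rw [hinner]; positivity
  · rw [hinner]; nlinarith [mul_pos htpos (pow_pos hnv 2)]

/-- Convexity: witnesses on both sides give a witness on the hyperplane. -/
lemma zCross {n : ℕ} {η' : Fin n → E} {σ' : Fin n → Bool} {v zp zm : E}
    (hpp : ZRealizes η' zp σ') (hmm : ZRealizes η' zm σ')
    (hp : 0 < ⟪v, zp⟫) (hm : ⟪v, zm⟫ < 0) :
    ∃ z, ⟪v, z⟫ = 0 ∧ ZRealizes η' z σ' := by
  set a : ℝ := ⟪v, zp⟫ with ha
  set b : ℝ := ⟪v, zm⟫ with hb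
  have hc : 0 < a - b := by linarith
  refine ⟨(a / (a - b)) • zm + (-b / (a - b)) • zp, ?_, ?_⟩
  · rw [inner_add_right, real_inner_smul_right, real_inner_smul_right, ← ha, ← hb]
    field_simp
    ring
  · intro i
    have hip := hpp i
    have him := hmm i
    have hinner : ⟪η' i, (a / (a - b)) • zm + (-b / (a - b)) • zp⟫
        = (a / (a - b)) * ⟪η' i, zm⟫ + (-b / (a - b)) * ⟪η' i, zp⟫ := by
      rw [inner_add_right, real_inner_smul_right, real_inner_smul_right]
    have hca : 0 < a / (a - b) := div_pos hp hc
    have hcb : 0 < -b / (a - b) := div_pos (by linarith) hc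
    cases hσ : σ' i
    · rw [hσ] at hip him
      simp only [Bool.false_eq_true, if_false] at hip him ⊢
      rw [hinner]
      nlinarith
    · rw [hσ] at hip him
      simp only [if_true] at hip him ⊢
      rw [hinner]
      nlinarith

lemma zOnes_cons {n : ℕ} (b : Bool) (σ' : Fin n → Bool) :
    zOnes (Fin.cons b σ') = (if b then 1 else 0) + zOnes σ' := by
  unfold zOnes
  rw [Fin.sum_univ_succ]
  simp [Fin.cons_zero, Fin.cons_succ]

lemma zSet_cons_false {n : ℕ} (σ' : Fin n → Bool) :
    {i : Fin (n + 1) | (Fin.cons false σ' : Fin (n+1) → Bool) i = true} = Fin.succ '' {j | σ' j = true} := by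
  ext i
  refine Fin.cases ?_ ?_ i
  · simp [Fin.succ_ne_zero]
  · intro j
    simp only [Set.mem_setOf_eq, Fin.cons_succ, Set.mem_image]
    exact ⟨fun h => ⟨j, h, rfl⟩, fun ⟨k, hk, hkj⟩ => by rwa [← Fin.succ_injective _ hkj]⟩

lemma zSet_cons_true {n : ℕ} (σ' : Fin n → Bool) :
    {i : Fin (n + 1) | (Fin.cons true σ' : Fin (n+1) → Bool) i = true}
      = insert 0 (Fin.succ '' {j | σ' j = true}) := by
  ext i
  refine Fin.cases ?_ ?_ i
  · simp
  · intro j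
    simp only [Set.mem_setOf_eq, Fin.cons_succ, Set.mem_insert_iff, Set.mem_image,
      Fin.succ_ne_zero, false_or]
    exact ⟨fun h => ⟨j, h, rfl⟩, fun ⟨k, hk, hkj⟩ => by rwa [← Fin.succ_injective _ hkj]⟩

lemma zRk_cons_false {n : ℕ} (η : Fin (n + 1) → E) (σ' : Fin n → Bool) :
    zRk η (Fin.cons false σ') = zRk (η ∘ Fin.succ) σ' := by
  unfold zRk
  rw [zSet_cons_false, Set.image_image]
  rfl

lemma zSpan_cons_true {n : ℕ} (η : Fin (n + 1) → E) (σ' : Fin n → Bool) :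
    Submodule.span ℝ (η '' {i : Fin (n + 1) | (Fin.cons true σ' : Fin (n+1) → Bool) i = true})
      = (Submodule.span ℝ {η 0} ⊔
          Submodule.span ℝ ((η ∘ Fin.succ) '' {j | σ' j = true}) : Submodule ℝ E) := by
  rw [zSet_cons_true, Set.image_insert_eq, Submodule.span_insert, Set.image_image]
  rfl

/-- If `v ≠ 0` and each `w i` agrees with `u i` modulo `v`, with `⟪v, u i⟫ = 0`, then
`span{v} ⊔ span(w '' s)` has rank `1 + rank (span (u '' s))`. -/
lemma zRank_sup {ι : Type*} {s : Set ι} {v : E} (hv : v ≠ 0) {w u : ι → E} (c : ι → ℝ)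
    (hwu : ∀ x ∈ s, w x = u x + c x • v) (hu : ∀ x ∈ s, ⟪v, u x⟫ = 0) :
    Module.finrank ℝ ↥(Submodule.span ℝ {v} ⊔ Submodule.span ℝ (w '' s))
      = Module.finrank ℝ (Submodule.span ℝ (u '' s)) + 1 := by
  have hsup : Submodule.span ℝ {v} ⊔ Submodule.span ℝ (w '' s)
      = Submodule.span ℝ {v} ⊔ Submodule.span ℝ (u '' s) := by
    apply le_antisymm
    · refine sup_le le_sup_left ?_
      rw [Submodule.span_le]
      rintro y ⟨x, hx, rfl⟩
      rw [hwu x hx]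
      exact Submodule.add_mem _
        (Submodule.mem_sup_right (Submodule.subset_span ⟨x, hx, rfl⟩))
        (Submodule.mem_sup_left (Submodule.smul_mem _ _ (Submodule.mem_span_singleton_self v)))
    · refine sup_le le_sup_left ?_
      rw [Submodule.span_le]
      rintro y ⟨x, hx, rfl⟩
      have : u x = w x - c x • v := by rw [hwu x hx]; abel
      rw [this]
      exact Submodule.sub_mem _
        (Submodule.mem_sup_right (Submodule.subset_span ⟨x, hx, rfl⟩))
        (Submodule.mem_sup_left (Submodule.smul_mem _ _ (Submodule.mem_span_singleton_self v)))
  rw [hsup]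
  have horth : ∀ x ∈ Submodule.span ℝ (u '' s), ⟪v, x⟫ = 0 := by
    intro x hx
    have hle : Submodule.span ℝ (u '' s) ≤ (Submodule.span ℝ {v})ᗮ := by
      rw [Submodule.span_le]
      rintro y ⟨x', hx', rfl⟩
      exact Submodule.mem_orthogonal_singleton_iff_inner_right.mpr (hu x' hx')
    exact Submodule.mem_orthogonal_singleton_iff_inner_right.mp (hle hx)
  have hinf : Submodule.span ℝ {v} ⊓ Submodule.span ℝ (u '' s) = ⊥ := by
    rw [eq_bot_iff]
    rintro x ⟨hx1, hx2⟩
    obtain ⟨a, rfl⟩ := Submodule.mem_span_singleton.mp hx1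
    have h0 := horth _ hx2
    rw [real_inner_smul_right, real_inner_self_eq_norm_sq] at h0
    have hvn : (0:ℝ) < ‖v‖ ^ 2 := pow_pos (norm_pos_iff.mpr hv) 2
    have ha : a = 0 := by
      rcases mul_eq_zero.mp h0 with h | h
      · exact h
      · exact absurd h (ne_of_gt hvn)
    simp [ha]
  have := Submodule.finrank_sup_add_finrank_inf_eq
    (Submodule.span ℝ {v}) (Submodule.span ℝ (u '' s))
  rw [hinf, finrank_bot, finrank_span_singleton hv] at this
  omega

/-- The contracted normal family: orthogonal projections of the remaining normals
onto the hyperplane of the first one. -/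
def zContr {n : ℕ} (η : Fin (n + 1) → E) : Fin n → E :=
  fun i => η i.succ - (⟪η 0, η i.succ⟫ / ⟪η 0, η 0⟫) • η 0

lemma zContr_orth {n : ℕ} (η : Fin (n + 1) → E) (hv : η 0 ≠ 0) (i : Fin n) :
    ⟪η 0, zContr η i⟫ = 0 := by
  have hvv : ⟪η 0, η 0⟫ ≠ 0 := inner_self_ne_zero.mpr hv
  unfold zContr
  rw [inner_sub_right, real_inner_smul_right]
  field_simp; simp

def zConsEquiv (n : ℕ) : (Bool × (Fin n → Bool)) ≃ (Fin (n + 1) → Bool) where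
  toFun p := Fin.cons p.1 p.2
  invFun σ := (σ 0, Fin.tail σ)
  left_inv := by rintro ⟨b, σ⟩; simp
  right_inv σ := Fin.cons_self_tail σ

lemma zG_succ {n : ℕ} (η : Fin (n + 1) → E) :
    zG η = ∑ σ' : Fin n → Bool,
      ((-1 : ℤ) ^ (zOnes (Fin.cons true σ') + zRk η (Fin.cons true σ'))
        + (-1) ^ (zOnes (Fin.cons false σ') + zRk η (Fin.cons false σ'))) := by
  unfold zG
  rw [← Fintype.sum_equiv (zConsEquiv n)
    (fun p : Bool × (Fin n → Bool) => (-1 : ℤ) ^ (zOnes (Fin.cons p.1 p.2) + zRk η (Fin.cons p.1 p.2)))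
    (fun σ => (-1 : ℤ) ^ (zOnes σ + zRk η σ)) (fun p => rfl)]
  rw [Fintype.sum_prod_type, Fintype.sum_bool]
  rw [← Finset.sum_add_distrib]

lemma zG_zero {n : ℕ} (η : Fin (n + 1) → E) (hv : η 0 = 0) : zG η = 0 := by
  rw [zG_succ]
  apply Finset.sum_eq_zero
  intro σ' _
  have hr : zRk η (Fin.cons true σ') = zRk (η ∘ Fin.succ) σ' := by
    unfold zRk
    rw [zSpan_cons_true, hv, Submodule.span_zero_singleton, bot_sup_eq]
  rw [hr, zRk_cons_false, zOnes_cons, zOnes_cons]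
  norm_num
  have h1 : 1 + zOnes σ' + zRk (η ∘ Fin.succ) σ'
      = (0 + zOnes σ' + zRk (η ∘ Fin.succ) σ') + 1 := by omega
  rw [h1, pow_succ]
  ring

lemma zG_rec {n : ℕ} (η : Fin (n + 1) → E) (hv : η 0 ≠ 0) :
    zG η = zG (η ∘ Fin.succ) + zG (zContr η) := by
  rw [zG_succ]
  have key : ∀ σ' : Fin n → Bool,
      zRk η (Fin.cons true σ') = zRk (zContr η) σ' + 1 := by
    intro σ'
    unfold zRk
    rw [zSpan_cons_true]
    exact zRank_sup (v := η 0) (w := η ∘ Fin.succ) (u := zContr η)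
      (s := {j : Fin n | σ' j = true}) hv (fun i => ⟪η 0, η i.succ⟫ / ⟪η 0, η 0⟫)
      (fun i _ => by unfold zContr; simp) (fun i _ => zContr_orth η hv i)
  have : ∀ σ' : Fin n → Bool,
      ((-1 : ℤ) ^ (zOnes (Fin.cons true σ') + zRk η (Fin.cons true σ'))
        + (-1) ^ (zOnes (Fin.cons false σ') + zRk η (Fin.cons false σ')))
      = (-1) ^ (zOnes σ' + zRk (η ∘ Fin.succ) σ') + (-1) ^ (zOnes σ' + zRk (zContr η) σ') := by
    intro σ'
    rw [key σ', zRk_cons_false, zOnes_cons, zOnes_cons]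
    norm_num
    have h1 : 1 + zOnes σ' + (zRk (zContr η) σ' + 1) = (zOnes σ' + zRk (zContr η) σ') + 2 := by
      omega
    rw [h1, pow_add]
    ring
  rw [Finset.sum_congr rfl (fun σ' _ => this σ'), Finset.sum_add_distrib]
  rfl

lemma zReal_zero {n : ℕ} (η : Fin (n + 1) → E) (hv : η 0 = 0) : zReal η = ∅ := by
  ext σ
  simp only [zReal, Finset.mem_filter, Finset.mem_univ, true_and, Finset.notMem_empty,
    iff_false, not_exists]
  intro z hz
  have := hz 0
  rw [hv, inner_zero_left] at this
  cases h : σ 0 <;> rw [h] at this <;> simp at this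

lemma zCross_iff_contr {n : ℕ} (η : Fin (n + 1) → E) (hv : η 0 ≠ 0) (σ' : Fin n → Bool) :
    (∃ z, ⟪η 0, z⟫ = 0 ∧ ZRealizes (η ∘ Fin.succ) z σ') ↔ ∃ z, ZRealizes (zContr η) z σ' := by
  have hvv : ⟪η 0, η 0⟫ ≠ 0 := inner_self_ne_zero.mpr hv
  constructor
  · rintro ⟨z, h0, hz⟩
    refine ⟨z, fun i => ?_⟩
    have heq : ⟪zContr η i, z⟫ = ⟪(η ∘ Fin.succ) i, z⟫ := by
      unfold zContr
      rw [inner_sub_left, real_inner_smul_left, h0]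
      simp
    rw [heq]
    exact hz i
  · rintro ⟨z, hz⟩
    set z₀ := z - (⟪η 0, z⟫ / ⟪η 0, η 0⟫) • η 0 with hz₀
    have h0 : ⟪η 0, z₀⟫ = 0 := by
      rw [hz₀, inner_sub_right, real_inner_smul_right]
      field_simp; simp
    refine ⟨z₀, h0, fun i => ?_⟩
    have heq : ⟪(η ∘ Fin.succ) i, z₀⟫ = ⟪zContr η i, z⟫ := by
      have hsplit : (η ∘ Fin.succ) i = zContr η i + (⟪η 0, η i.succ⟫ / ⟪η 0, η 0⟫) • η 0 := by
        unfold zContr; simp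
      rw [hsplit, inner_add_left, real_inner_smul_left, h0, mul_zero, add_zero]
      rw [hz₀, inner_sub_right, real_inner_smul_right]
      have : ⟪zContr η i, η 0⟫ = 0 := by
        rw [real_inner_comm]; exact zContr_orth η hv i
      rw [this, mul_zero, sub_zero]
    rw [heq]
    exact hz i

lemma zReal_card_eq_sum {n : ℕ} (η : Fin n → E) :
    (zReal η).card = ∑ σ : Fin n → Bool, (if (∃ z, ZRealizes η z σ) then 1 else 0) := by
  rw [zReal, Finset.card_filter]

lemma zReal_rec {n : ℕ} (η : Fin (n + 1) → E) (hv : η 0 ≠ 0) :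
    (zReal η).card = (zReal (η ∘ Fin.succ)).card + (zReal (zContr η)).card := by
  classical
  have hcard : (zReal η).card
      = ∑ σ' : Fin n → Bool, ((zReal η).filter (fun σ => Fin.tail σ = σ')).card :=
    Finset.card_eq_sum_card_fiberwise (fun σ _ => Finset.mem_univ _)
  have hfib : ∀ σ' : Fin n → Bool, ((zReal η).filter (fun σ => Fin.tail σ = σ')).card
      = (if (∃ z, ZRealizes (η ∘ Fin.succ) z σ') then 1 else 0)
        + (if (∃ z, ⟪η 0, z⟫ = 0 ∧ ZRealizes (η ∘ Fin.succ) z σ') then 1 else 0) := by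
    intro σ'
    have hfe : (zReal η).filter (fun σ => Fin.tail σ = σ')
        = ({Fin.cons true σ', Fin.cons false σ'} : Finset (Fin (n+1) → Bool)).filter
            (fun σ => ∃ z, ZRealizes η z σ) := by
      ext σ
      simp only [zReal, Finset.mem_filter, Finset.mem_univ, true_and, Finset.mem_insert,
        Finset.mem_singleton]
      constructor
      · rintro ⟨hreal, htail⟩
        refine ⟨?_, hreal⟩
        have hσ := Fin.cons_self_tail σ
        cases h0 : σ 0
        · right; rw [← hσ, htail, h0]
        · left; rw [← hσ, htail, h0]
      · rintro ⟨hσ, hreal⟩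
        refine ⟨hreal, ?_⟩
        rcases hσ with rfl | rfl <;> simp [Fin.tail_cons]
    have hne : (Fin.cons true σ' : Fin (n+1) → Bool) ≠ Fin.cons false σ' := by
      intro h
      have := congrFun h 0
      simp at this
    rw [hfe]
    -- characterizations
    have hP1t : (∃ z, ZRealizes η z (Fin.cons true σ'))
        ↔ ∃ z, 0 < ⟪η 0, z⟫ ∧ ZRealizes (η ∘ Fin.succ) z σ' := by
      constructor
      · rintro ⟨z, hz⟩
        obtain ⟨h1, h2⟩ := zRealizes_cons.mp hz
        exact ⟨z, by simpa using h1, h2⟩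
      · rintro ⟨z, h1, h2⟩
        exact ⟨z, zRealizes_cons.mpr ⟨by simpa using h1, h2⟩⟩
    have hP1f : (∃ z, ZRealizes η z (Fin.cons false σ'))
        ↔ ∃ z, ⟪η 0, z⟫ < 0 ∧ ZRealizes (η ∘ Fin.succ) z σ' := by
      constructor
      · rintro ⟨z, hz⟩
        obtain ⟨h1, h2⟩ := zRealizes_cons.mp hz
        exact ⟨z, by simpa using h1, h2⟩
      · rintro ⟨z, h1, h2⟩
        exact ⟨z, zRealizes_cons.mpr ⟨by simpa using h1, h2⟩⟩
    have h3 : (∃ z, ⟪η 0, z⟫ = 0 ∧ ZRealizes (η ∘ Fin.succ) z σ')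
        → (∃ z, ZRealizes η z (Fin.cons true σ')) ∧ (∃ z, ZRealizes η z (Fin.cons false σ')) := by
      rintro ⟨z, h0, hz⟩
      obtain ⟨zp, zm, hzp, hzm, hp, hm⟩ := zPerturb hv hz h0
      exact ⟨hP1t.mpr ⟨zp, hp, hzp⟩, hP1f.mpr ⟨zm, hm, hzm⟩⟩
    have h4 : (∃ z, ZRealizes η z (Fin.cons true σ')) → (∃ z, ZRealizes η z (Fin.cons false σ'))
        → (∃ z, ⟪η 0, z⟫ = 0 ∧ ZRealizes (η ∘ Fin.succ) z σ') := by
      rintro ht hf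
      obtain ⟨zp, hp, hzp⟩ := hP1t.mp ht
      obtain ⟨zm, hm, hzm⟩ := hP1f.mp hf
      obtain ⟨z, h0, hz⟩ := zCross hzp hzm hp hm
      exact ⟨z, h0, hz⟩
    have h5 : (∃ z, ZRealizes (η ∘ Fin.succ) z σ')
        → (∃ z, ZRealizes η z (Fin.cons true σ')) ∨ (∃ z, ZRealizes η z (Fin.cons false σ')) := by
      rintro ⟨z, hz⟩
      rcases lt_trichotomy (⟪η 0, z⟫) 0 with h | h | h
      · exact Or.inr (hP1f.mpr ⟨z, h, hz⟩)
      · exact Or.inl ((h3 ⟨z, h, hz⟩).1)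
      · exact Or.inl (hP1t.mpr ⟨z, h, hz⟩)
    by_cases h1 : ∃ z, ZRealizes η z (Fin.cons true σ') <;>
      by_cases h2 : ∃ z, ZRealizes η z (Fin.cons false σ')
    · have hr : ∃ z, ZRealizes (η ∘ Fin.succ) z σ' := by
        obtain ⟨z, _, hz⟩ := hP1t.mp h1; exact ⟨z, hz⟩
      have hc := h4 h1 h2
      simp [Finset.filter_insert, Finset.filter_singleton, h1, h2, hne, hr, hc]
    · have hr : ∃ z, ZRealizes (η ∘ Fin.succ) z σ' := by
        obtain ⟨z, _, hz⟩ := hP1t.mp h1; exact ⟨z, hz⟩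
      have hc : ¬ ∃ z, ⟪η 0, z⟫ = 0 ∧ ZRealizes (η ∘ Fin.succ) z σ' := fun h => h2 (h3 h).2
      simp [Finset.filter_insert, Finset.filter_singleton, h1, h2, hne, hr, hc]
    · have hr : ∃ z, ZRealizes (η ∘ Fin.succ) z σ' := by
        obtain ⟨z, _, hz⟩ := hP1f.mp h2; exact ⟨z, hz⟩
      have hc : ¬ ∃ z, ⟪η 0, z⟫ = 0 ∧ ZRealizes (η ∘ Fin.succ) z σ' := fun h => h1 (h3 h).1
      simp [Finset.filter_insert, Finset.filter_singleton, h1, h2, hne, hr, hc]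
    · have hr : ¬ ∃ z, ZRealizes (η ∘ Fin.succ) z σ' := by
        intro h; rcases h5 h with h | h
        · exact h1 h
        · exact h2 h
      have hc : ¬ ∃ z, ⟪η 0, z⟫ = 0 ∧ ZRealizes (η ∘ Fin.succ) z σ' := fun h => h1 (h3 h).1
      simp [Finset.filter_insert, Finset.filter_singleton, h1, h2, hne, hr, hc]
  rw [hcard, Finset.sum_congr rfl (fun σ' _ => hfib σ'), Finset.sum_add_distrib]
  congr 1
  · rw [zReal_card_eq_sum (η ∘ Fin.succ)]
  · rw [zReal_card_eq_sum (zContr η)]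
    apply Finset.sum_congr rfl
    intro σ' _
    congr 1
    rw [eq_iff_iff]
    exact zCross_iff_contr η hv σ'

lemma zMain : ∀ {n : ℕ} (η : Fin n → E), ((zReal η).card : ℤ) = zG η := by
  intro n
  induction n with
  | zero =>
    intro η
    have h1 : zReal η = Finset.univ := by
      ext σ
      simp only [zReal, Finset.mem_filter, Finset.mem_univ, true_and, iff_true]
      exact ⟨0, fun i => i.elim0⟩
    have hterm : ∀ σ : Fin 0 → Bool, zOnes σ + zRk η σ = 0 := by
      intro σ
      have hο : zOnes σ = 0 := by simp [zOnes]
      have hr : zRk η σ = 0 := by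
        unfold zRk
        rw [Set.eq_empty_of_isEmpty {i : Fin 0 | σ i = true}, Set.image_empty,
          Submodule.span_empty, finrank_bot]
      omega
    rw [h1]
    unfold zG
    rw [Finset.sum_congr rfl (fun σ _ => by rw [hterm σ, pow_zero])]
    simp
  | succ n IH =>
    intro η
    by_cases hv : η 0 = 0
    · rw [zReal_zero η hv, zG_zero η hv]
      simp
    · rw [zReal_rec η hv, zG_rec η hv]
      push_cast
      rw [IH (η ∘ Fin.succ), IH (zContr η)]

/-- Uniqueness of solutions of the (upper-triangular) Möbius recursion on a finite poset. -/
lemma zMobius_unique {α : Type*} [PartialOrder α] (L : Finset α) (f g : α → ℤ) (δ : α → ℤ)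
    (hf : ∀ x ∈ L, ∑ z ∈ L.filter (fun z => x ≤ z), f z = δ x)
    (hg : ∀ x ∈ L, ∑ z ∈ L.filter (fun z => x ≤ z), g z = δ x) :
    ∀ x ∈ L, f x = g x := by
  suffices key : ∀ (k : ℕ) (x : α), x ∈ L → (L.filter (fun z => x < z)).card ≤ k → f x = g x by
    exact fun x hx => key (L.filter (fun z => x < z)).card x hx le_rfl
  intro k
  induction k using Nat.strong_induction_on with
  | _ k IH =>
    intro x hx hcard
    have hsplit : L.filter (fun z => x ≤ z) = insert x (L.filter (fun z => x < z)) := by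
      ext z
      simp only [Finset.mem_filter, Finset.mem_insert]
      constructor
      · rintro ⟨hz, hle⟩
        by_cases hzx : z = x
        · exact Or.inl hzx
        · exact Or.inr ⟨hz, lt_of_le_of_ne hle (Ne.symm hzx)⟩
      · rintro (rfl | ⟨hz, hlt⟩)
        · exact ⟨hx, le_rfl⟩
        · exact ⟨hz, hlt.le⟩
    have hxnot : x ∉ L.filter (fun z => x < z) := by simp
    have hf' := hf x hx
    have hg' := hg x hx
    rw [hsplit, Finset.sum_insert hxnot] at hf' hg'
    have heq : ∀ z ∈ L.filter (fun z => x < z), f z = g z := by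
      intro z hz
      obtain ⟨hzL, hxz⟩ := Finset.mem_filter.mp hz
      have hsubset : L.filter (fun w => z < w) ⊆ L.filter (fun w => x < w) := by
        intro w hw
        obtain ⟨hwL, hzw⟩ := Finset.mem_filter.mp hw
        exact Finset.mem_filter.mpr ⟨hwL, hxz.trans hzw⟩
      have hzz : z ∉ L.filter (fun w => z < w) := by simp
      have hsub : L.filter (fun w => z < w) ⊂ L.filter (fun w => x < w) :=
        (Finset.ssubset_iff_of_subset hsubset).mpr ⟨z, hz, hzz⟩
      have hlt := Finset.card_lt_card hsub
      exact IH _ (lt_of_lt_of_le hlt hcard) z hzL le_rfl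
    have hs : ∑ z ∈ L.filter (fun z => x < z), f z = ∑ z ∈ L.filter (fun z => x < z), g z :=
      Finset.sum_congr rfl heq
    omega

lemma zMem_span_orthogonal (T : Set E) (z : E) :
    z ∈ (Submodule.span ℝ T)ᗮ ↔ ∀ t ∈ T, ⟪t, z⟫ = 0 := by
  rw [Submodule.mem_orthogonal]
  constructor
  · exact fun h t ht => h t (Submodule.subset_span ht)
  · intro h u hu
    induction hu using Submodule.span_induction with
    | mem x hx => exact h x hx
    | zero => exact inner_zero_left z
    | add x y hx hy ihx ihy => rw [inner_add_left, ihx, ihy]; ring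
    | smul a x hx ihx => rw [real_inner_smul_left, ihx]; ring


/-- Zaslavsky's theorem, equation (1) of the paper.  For a central
arrangement `𝒜` of rank `r` in `ℝ^d`, `(-1)^r χ_𝒜(-1) = #regions`, where
`χ_𝒜(t) = ∑_{x ∈ L(𝒜)} μ(x) t^(r-(d-dim x))`.  (The rank is the dimension of the span
of the normals, i.e. of the orthogonal complement of `⋂_{H ∈ 𝒜} H`.) -/
theorem zaslavsky_number_of_regions {d : ℕ}
    (A : Finset (Submodule ℝ (Euc d))) (hA : ∀ H ∈ A, IsLinearHyperplane H)
    (r : ℕ) (hr : r = Module.finrank ℝ (((A.inf id : Submodule ℝ (Euc d)))ᗮ : Submodule ℝ (Euc d)))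
    (mu : Submodule ℝ (Euc d) → ℤ)
    -- `mu` is the one-variable Möbius function `μ(x) = μ(ℝ^d, x)` of `L(𝒜)`
    -- (ordered by reverse inclusion, with minimal element `⊤ = ℝ^d`),
    -- characterized by the defining recursion `∑_{⊤ ⊒ z ⊒ x} μ(z) = δ_{x,⊤}`:
    (hmu : ∀ x ∈ interPoset A,
      ∑ z ∈ (interPoset A).filter (fun z : Submodule ℝ (Euc d) => x ≤ z), mu z
        = if x = (⊤ : Submodule ℝ (Euc d)) then 1 else 0)
 :
    (-1 : ℤ) ^ r *
        ∑ x ∈ interPoset A, mu x * (-1) ^ (r - (d - Module.finrank ℝ x))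
      = ({C : Set (Euc d) | IsRegion A C}.ncard : ℤ) := by
  classical
  have hd : Module.finrank ℝ (Euc d) = d := finrank_euclideanSpace_fin
  set n := A.card with hn
  set e : Fin n ≃ {H // H ∈ A} := A.equivFin.symm with he
  have hmemA : ∀ i : Fin n, (e i : Submodule ℝ (Euc d)) ∈ A := fun i => (e i).2
  choose η hη0 hηH using fun i : Fin n => hA (e i) (hmemA i)
  have hmem : ∀ (i : Fin n) (z : Euc d), z ∈ (e i : Submodule ℝ (Euc d)) ↔ ⟪η i, z⟫ = 0 := by
    intro i z
    rw [hηH i]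
    exact Submodule.mem_orthogonal_singleton_iff_inner_right
  -- The complement of the arrangement
  have hcompl : hypComplement A = {w : Euc d | ∀ i, ⟪η i, w⟫ ≠ 0} := by
    ext z
    simp only [hypComplement, Set.mem_setOf_eq]
    constructor
    · intro h i hinner
      exact h (e i) (hmemA i) ((hmem i z).mpr hinner)
    · intro h H hH hzH
      have hHe : (e (e.symm ⟨H, hH⟩) : Submodule ℝ (Euc d)) = H := by
        rw [e.apply_symm_apply]
      exact h (e.symm ⟨H, hH⟩) ((hmem (e.symm ⟨H, hH⟩) z).mp (by rw [hHe]; exact hzH))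
  -- The number of regions
  have hregions : ({C : Set (Euc d) | IsRegion A C}.ncard : ℤ) = ((zReal η).card : ℤ) := by
    have hset : {C : Set (Euc d) | IsRegion A C}
        = {C : Set (Euc d) | ∃ z ∈ {w : Euc d | ∀ i, ⟪η i, w⟫ ≠ 0},
            C = connectedComponentIn {w : Euc d | ∀ i, ⟪η i, w⟫ ≠ 0} z} := by
      simp only [IsRegion, hcompl]
    rw [hset, zRegion_count η]
  set L := interPoset A with hL
  have hinfle : ∀ x ∈ L, A.inf id ≤ x := by
    intro x hx
    obtain ⟨S, hS, rfl⟩ := Finset.mem_image.mp hx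
    exact Finset.inf_mono (Finset.mem_powerset.mp hS)
  have hcodim_le : ∀ x ∈ L, d - Module.finrank ℝ x ≤ r := by
    intro x hx
    have h1 : xᗮ ≤ ((A.inf id : Submodule ℝ (Euc d)))ᗮ :=
      Submodule.orthogonal_le (hinfle x hx)
    have h2 : Module.finrank ℝ (xᗮ : Submodule ℝ (Euc d)) ≤ r := hr ▸ Submodule.finrank_mono h1
    have h3 := Submodule.finrank_add_finrank_orthogonal x
    omega
  -- inf of a subset is the orthogonal of the span of the normals
  have hinf_eq : ∀ S ∈ A.powerset,
      S.inf id = (Submodule.span ℝ (η '' {i | (e i : Submodule ℝ (Euc d)) ∈ S}))ᗮ := by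
    intro S hS
    have hSA := Finset.mem_powerset.mp hS
    ext z
    rw [Submodule.mem_finsetInf, zMem_span_orthogonal]
    constructor
    · rintro h t ⟨i, hi, rfl⟩
      exact (hmem i z).mp (h _ hi)
    · intro h H hH
      have hHe : (e (e.symm ⟨H, hSA hH⟩) : Submodule ℝ (Euc d)) = H := by
        rw [e.apply_symm_apply]
      show z ∈ H
      rw [← hHe]
      refine (hmem _ z).mpr (h _ ⟨e.symm ⟨H, hSA hH⟩, ?_, rfl⟩)
      show (e (e.symm ⟨H, hSA hH⟩) : Submodule ℝ (Euc d)) ∈ S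
      rw [hHe]; exact hH
  have hrank : ∀ S ∈ A.powerset,
      d - Module.finrank ℝ ((S.inf id : Submodule ℝ (Euc d)))
        = Module.finrank ℝ
            (Submodule.span ℝ (η '' {i | (e i : Submodule ℝ (Euc d)) ∈ S})) := by
    intro S hS
    rw [hinf_eq S hS]
    have h3 := Submodule.finrank_add_finrank_orthogonal
      (Submodule.span ℝ (η '' {i | (e i : Submodule ℝ (Euc d)) ∈ S}))
    omega
  -- the Möbius function equals the alternating-sum function nu
  set nu : Submodule ℝ (Euc d) → ℤ :=
    fun x => ∑ S ∈ A.powerset.filter (fun S => S.inf id = x), (-1 : ℤ) ^ S.card with hnudef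
  have hAx : ∀ x ∈ L, (A.filter (fun H => x ≤ H) = ∅ ↔ x = ⊤) := by
    intro x hx
    constructor
    · intro hempty
      obtain ⟨S, hS, rfl⟩ := Finset.mem_image.mp hx
      have hSA := Finset.mem_powerset.mp hS
      have hSempty : S = ∅ := by
        by_contra hne
        obtain ⟨H, hH⟩ := Finset.nonempty_iff_ne_empty.mpr hne
        have hmemf : H ∈ A.filter (fun K => S.inf id ≤ K) :=
          Finset.mem_filter.mpr ⟨hSA hH, Finset.inf_le hH⟩
        rw [hempty] at hmemf
        exact absurd hmemf (Finset.notMem_empty H)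
      rw [hSempty]
      exact Finset.inf_empty
    · rintro rfl
      rw [Finset.filter_eq_empty_iff]
      intro H hH hle
      obtain ⟨w, hw0, hHw⟩ := hA H hH
      have hwH : w ∈ H := hle Submodule.mem_top
      rw [hHw, Submodule.mem_orthogonal_singleton_iff_inner_right] at hwH
      exact hw0 (inner_self_eq_zero.mp hwH)
  have hnurec : ∀ x ∈ L, ∑ z ∈ L.filter (fun z => x ≤ z), nu z
      = if x = (⊤ : Submodule ℝ (Euc d)) then 1 else 0 := by
    intro x hx
    have hmaps : ∀ S ∈ A.powerset.filter (fun S => x ≤ S.inf id),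
        S.inf id ∈ L.filter (fun z => x ≤ z) := by
      intro S hS
      obtain ⟨hS1, hS2⟩ := Finset.mem_filter.mp hS
      exact Finset.mem_filter.mpr ⟨Finset.mem_image_of_mem _ hS1, hS2⟩
    have hfw := Finset.sum_fiberwise_of_maps_to hmaps (fun S => (-1 : ℤ) ^ S.card)
    have hstep1 : ∑ z ∈ L.filter (fun z => x ≤ z), nu z
        = ∑ S ∈ A.powerset.filter (fun S => x ≤ S.inf id), (-1 : ℤ) ^ S.card := by
      rw [← hfw]
      apply Finset.sum_congr rfl
      intro z hz
      obtain ⟨hzL, hxz⟩ := Finset.mem_filter.mp hz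
      rw [hnudef]
      rw [Finset.filter_filter]
      apply Finset.sum_congr ?_ (fun _ _ => rfl)
      apply Finset.filter_congr
      intro S hS
      constructor
      · intro hSz
        exact ⟨by rw [hSz]; exact hxz, hSz⟩
      · rintro ⟨-, hSz⟩
        exact hSz
    have hstep2 : A.powerset.filter (fun S => x ≤ S.inf id)
        = (A.filter (fun H => x ≤ H)).powerset := by
      ext S
      simp only [Finset.mem_filter, Finset.mem_powerset]
      constructor
      · rintro ⟨hSA, hle⟩
        intro H hH
        exact Finset.mem_filter.mpr ⟨hSA hH, Finset.le_inf_iff.mp hle H hH⟩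
      · intro hsub
        refine ⟨fun H hH => (Finset.mem_filter.mp (hsub hH)).1, ?_⟩
        exact Finset.le_inf (fun H hH => (Finset.mem_filter.mp (hsub hH)).2)
    rw [hstep1, hstep2, Finset.sum_powerset_neg_one_pow_card]
    simp only [hAx x hx]
  have hmueq : ∀ x ∈ L, mu x = nu x :=
    zMobius_unique L mu nu (fun x => if x = (⊤ : Submodule ℝ (Euc d)) then 1 else 0) hmu hnurec
  -- the sign lemma
  have hsign : ∀ x ∈ L, mu x * (((-1 : ℤ) ^ r) * (-1) ^ (r - (d - Module.finrank ℝ x)))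
      = nu x * (-1) ^ (d - Module.finrank ℝ x) := by
    intro x hx
    have hk := hcodim_le x hx
    rw [hmueq x hx]
    congr 1
    rw [← pow_add]
    have h2 : r + (r - (d - Module.finrank ℝ x))
        = 2 * (r - (d - Module.finrank ℝ x)) + (d - Module.finrank ℝ x) := by omega
    rw [h2, pow_add, pow_mul]
    norm_num
  have hinj : Function.Injective (fun i : Fin n => (e i : Submodule ℝ (Euc d))) :=
    fun a b hab => e.injective (Subtype.coe_injective hab)
  set Φ : (Fin n → Bool) → Finset (Submodule ℝ (Euc d)) :=
    fun σ => (Finset.univ.filter (fun i : Fin n => σ i = true)).image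
      (fun i => (e i : Submodule ℝ (Euc d))) with hPhi
  set Ψ : Finset (Submodule ℝ (Euc d)) → (Fin n → Bool) :=
    fun S => fun i : Fin n => decide ((e i : Submodule ℝ (Euc d)) ∈ S) with hPsi
  have hPsiset : ∀ S, {i : Fin n | Ψ S i = true} = {i | (e i : Submodule ℝ (Euc d)) ∈ S} := by
    intro S
    ext i
    simp [hPsi]
  have hPhiPsi : ∀ S ∈ A.powerset, Φ (Ψ S) = S := by
    intro S hS
    have hSA := Finset.mem_powerset.mp hS
    ext H
    rw [hPhi]
    simp only [Finset.mem_image, Finset.mem_filter, Finset.mem_univ, true_and, hPsi,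
      decide_eq_true_eq]
    constructor
    · rintro ⟨i, hi, rfl⟩
      exact hi
    · intro hH
      refine ⟨e.symm ⟨H, hSA hH⟩, ?_, ?_⟩
      · show (e (e.symm ⟨H, hSA hH⟩) : Submodule ℝ (Euc d)) ∈ S
        rw [e.apply_symm_apply]
        exact hH
      · rw [e.apply_symm_apply]
  have hPsiPhi : ∀ σ : Fin n → Bool, Ψ (Φ σ) = σ := by
    intro σ
    funext i
    have hiff : (e i : Submodule ℝ (Euc d)) ∈ Φ σ ↔ σ i = true := by
      rw [hPhi]
      simp only [Finset.mem_image, Finset.mem_filter, Finset.mem_univ, true_and]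
      constructor
      · rintro ⟨k, hk, hek⟩
        rwa [← hinj hek]
      · intro h
        exact ⟨i, h, rfl⟩
    rw [hPsi]
    cases hσ : σ i
    · refine decide_eq_false (fun hc => ?_)
      have hct := hiff.mp hc
      rw [hσ] at hct
      exact Bool.false_ne_true hct
    · exact decide_eq_true (hiff.mpr hσ)
  have hcardS : ∀ S ∈ A.powerset, S.card = zOnes (Ψ S) := by
    intro S hS
    conv_lhs => rw [← hPhiPsi S hS]
    rw [hPhi]
    rw [Finset.card_image_of_injective _ hinj, Finset.card_filter]
    rfl
  calc (-1 : ℤ) ^ r * ∑ x ∈ interPoset A, mu x * (-1) ^ (r - (d - Module.finrank ℝ x))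
      = ∑ x ∈ L, mu x * (((-1 : ℤ) ^ r) * (-1) ^ (r - (d - Module.finrank ℝ x))) := by
        rw [Finset.mul_sum]
        exact Finset.sum_congr rfl (fun x _ => by ring)
    _ = ∑ x ∈ L, nu x * (-1) ^ (d - Module.finrank ℝ x) :=
        Finset.sum_congr rfl (fun x hx => hsign x hx)
    _ = ∑ S ∈ A.powerset,
          (-1 : ℤ) ^ S.card * (-1) ^ (d - Module.finrank ℝ ((S.inf id : Submodule ℝ (Euc d)))) := by
        have hmaps : ∀ S ∈ A.powerset, S.inf id ∈ L := fun S hS => Finset.mem_image_of_mem _ hS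
        rw [← Finset.sum_fiberwise_of_maps_to hmaps
          (fun S => (-1 : ℤ) ^ S.card * (-1) ^ (d - Module.finrank ℝ ((S.inf id : Submodule ℝ (Euc d)))))]
        apply Finset.sum_congr rfl
        intro x hx
        rw [hnudef, Finset.sum_mul]
        apply Finset.sum_congr rfl
        intro S hS
        obtain ⟨-, hSx⟩ := Finset.mem_filter.mp hS
        rw [hSx]
    _ = ∑ σ : Fin n → Bool, (-1 : ℤ) ^ (zOnes σ + zRk η σ) := by
        apply Finset.sum_nbij' (i := Ψ) (j := Φ)
        · intro S _
          exact Finset.mem_univ _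
        · intro σ _
          rw [hPhi, Finset.mem_powerset]
          intro H hH
          obtain ⟨i, -, rfl⟩ := Finset.mem_image.mp hH
          exact hmemA i
        · intro S hS
          exact hPhiPsi S hS
        · intro σ _
          exact hPsiPhi σ
        · intro S hS
          rw [← pow_add]
          congr 1
          have h2 : Module.finrank ℝ
              (Submodule.span ℝ (η '' {i | (e i : Submodule ℝ (Euc d)) ∈ S}))
              = zRk η (Ψ S) := by
            unfold zRk
            rw [hPsiset S]
          rw [hcardS S hS, hrank S hS, h2]
    _ = zG η := rfl
    _ = ((zReal η).card : ℤ) := (zMain η).symm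
    _ = ({C : Set (Euc d) | IsRegion A C}.ncard : ℤ) := hregions.symm
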